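/- Let T ≥ 1, G > 0, ε_T > 0, and let C ≥ 1 satisfy the Rademacher quadratic anticoncentration property for horizon T. Let a_1,…,a_T be a one-dimensional online algorithm over T rounds which guarantees that for every loss sequence g_1,…,g_T ∈ ℝ with |g_t| ≤ G for all t, its regret against the zero comparator satisfies ∑_{t=1}^T g_t·a_t(g_1,…,g_{t−1}) ≤ G·ε_T. Let M ∈ ℝ^{T×T} be symmetric positive definite, set A := M^{−1} and B := A − Diag(A), assume B ≠ 0 and ‖B‖_F² ≥ (T/2)·max_{1≤i≤T} ∑_{j=1}^T B_{ij}². Then for every P > 0 such that 4C² ≤ log₂(√(P·(Tr(A)+‖B‖_F))/(2ε_T)) ≤ T, there exist losses g_1,…,g_T ∈ ℝ with |g_t| ≤ G for all t and a comparator sequence u_1,…,u_T ∈ ℝ with ‖(u_1,…,u_T)ᵀ‖_M = √P such that, with w_t := a_t(g_1,…,g_{t−1}), the dynamic regret satisfies ∑_{t=1}^T g_t(w_t − u_t) ≥ G·ε_T + (G/2)·√( P·( Tr(A) + ‖B‖_F·√( log₂(√(P·(Tr(A)+‖B‖_F))/(2ε_T)) / (4C²) ) ) ). -/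

import Mathlib

open Matrix Finset

/-- The Frobenius norm `‖B‖_F := √(∑_{i,j} B_{ij}²)`. -/
noncomputable def frobNorm {T : ℕ} (B : Matrix (Fin T) (Fin T) ℝ) : ℝ :=
  Real.sqrt (∑ i : Fin T, ∑ j : Fin T, (B i j)^2)

/-- The sign vector associated with `ε : Fin T → Bool`. -/
def signVec {T : ℕ} (ε : Fin T → Bool) : Fin T → ℝ :=
  fun i => if ε i then 1 else -1

/-- `C ≥ 1` satisfies the **Rademacher quadratic anticoncentration property**
for horizon `T`: for every nonzero symmetric `B ∈ ℝ^{T×T}` with zero diagonal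
and every `1 ≤ q ≤ ‖B‖_F/(C√(2·max_i ∑_j B_{ij}²))`, independent uniform signs
`Y ∈ {−1,1}^T` satisfy `Pr(∑_{i,j} Y_iY_jB_{ij} ≥ q‖B‖_F) ≥ 2^{−4C²q²}`
(probability computed by uniform counting over `{−1,1}^T`). -/
noncomputable def RademacherAnticoncentration (T : ℕ) (C : ℝ) : Prop :=
  ∀ B : Matrix (Fin T) (Fin T) ℝ, B ≠ 0 → B.IsSymm → (∀ i, B i i = 0) →
    ∀ q : ℝ, 1 ≤ q →
      q ≤ frobNorm B /
            (C * Real.sqrt (2 * ⨆ i : Fin T, ∑ j : Fin T, (B i j)^2)) →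
      (2 : ℝ) ^ (-(4 * C^2 * q^2)) ≤
        ((Finset.univ.filter (fun ε : Fin T → Bool =>
            q * frobNorm B ≤
              ∑ i : Fin T, ∑ j : Fin T, signVec ε i * signVec ε j * B i j)).card : ℝ)
          / 2^T

lemma signVec_flip {T : ℕ} (ε : Fin T → Bool) (t : Fin T) :
    signVec (Function.update ε t (!ε t)) t = - signVec ε t := by
  simp only [signVec, Function.update_self]
  cases h : ε t <;> simp [h]

lemma signVec_sq {T : ℕ} (ε : Fin T → Bool) (i : Fin T) :
    signVec ε i * signVec ε i = 1 := by
  simp only [signVec]; cases h : ε i <;> norm_num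

lemma sum_S_zero {T : ℕ} (G : ℝ) (alg : Fin T → (Fin T → ℝ) → ℝ)
    (hcausal : ∀ (t : Fin T) (g g' : Fin T → ℝ),
      (∀ s : Fin T, s < t → g s = g' s) → alg t g = alg t g') :
    ∑ ε : Fin T → Bool, ∑ t : Fin T,
        (G * signVec ε t) * alg t (fun s => G * signVec ε s) = 0 := by
  rw [Finset.sum_comm]
  refine Finset.sum_eq_zero fun t _ => ?_
  refine Finset.sum_ninvolution (fun ε => Function.update ε t (!ε t)) ?_ ?_ ?_ ?_
  · intro ε
    have halg : alg t (fun s => G * signVec (Function.update ε t (!ε t)) s)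
        = alg t (fun s => G * signVec ε s) := by
      refine hcausal t _ _ fun s hs => ?_
      have hst : s ≠ t := ne_of_lt hs
      simp [signVec, Function.update_of_ne hst]
    rw [halg, signVec_flip]
    ring
  · intro ε _ h
    have := congrFun h t
    simp at this
  · intro ε; exact Finset.mem_univ _
  · intro ε
    ext s
    rcases eq_or_ne s t with rfl | hst
    · simp
    · simp [Function.update_of_ne hst]

set_option maxHeartbeats 1000000 in
/-- **Frontier of dynamic regret lower bounds.**
Let `alg` be a one-dimensional online algorithm over `T` rounds (`alg t g`
plays round `t` using only `g_s`, `s < t`) with regret against the zero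
comparator at most `G·ε_T` on all loss sequences bounded by `G`. Let `M` be
symmetric positive definite, `A := M⁻¹`, `B := A − Diag(A) ≠ 0`, and assume
`‖B‖_F² ≥ (T/2)·max_i ∑_j B_{ij}²`. Then for every `P > 0` with
`4C² ≤ log₂(√(P(Tr(A)+‖B‖_F))/(2ε_T)) ≤ T`, there are losses bounded by `G`
and a comparator sequence `u` with `‖u‖_M = √P` whose dynamic regret is at
least `G·ε_T + (G/2)·√(P(Tr(A) + ‖B‖_F·√(log₂(√(P(Tr(A)+‖B‖_F))/(2ε_T))/(4C²))))`. -/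
theorem dynamic_regret_lower_bound_frontier (T : ℕ) (hT : 1 ≤ T)
    (G εT C : ℝ) (hG : 0 < G) (hε : 0 < εT) (hC : 1 ≤ C)
    (hanti : RademacherAnticoncentration T C)
    (alg : Fin T → (Fin T → ℝ) → ℝ)
    (hcausal : ∀ (t : Fin T) (g g' : Fin T → ℝ),
      (∀ s : Fin T, s < t → g s = g' s) → alg t g = alg t g')
    (hregret : ∀ g : Fin T → ℝ, (∀ t, |g t| ≤ G) →
      ∑ t : Fin T, g t * alg t g ≤ G * εT)
    (M : Matrix (Fin T) (Fin T) ℝ) (hM : M.PosDef)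
    (A B : Matrix (Fin T) (Fin T) ℝ) (hA : A = M⁻¹)
    (hB : B = A - Matrix.diagonal (fun i => A i i)) (hBne : B ≠ 0)
    (hBF : ((T : ℝ) / 2) * (⨆ i : Fin T, ∑ j : Fin T, (B i j)^2)
            ≤ ∑ i : Fin T, ∑ j : Fin T, (B i j)^2) :
    ∀ P : ℝ, 0 < P →
      4 * C^2 ≤ Real.logb 2
          (Real.sqrt (P * (A.trace + frobNorm B)) / (2 * εT)) →
      Real.logb 2 (Real.sqrt (P * (A.trace + frobNorm B)) / (2 * εT)) ≤ T →
      ∃ g u : Fin T → ℝ,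
        (∀ t, |g t| ≤ G) ∧
        Real.sqrt (u ⬝ᵥ (M *ᵥ u)) = Real.sqrt P ∧
        G * εT + (G / 2) * Real.sqrt (P * (A.trace + frobNorm B *
            Real.sqrt (Real.logb 2
                (Real.sqrt (P * (A.trace + frobNorm B)) / (2 * εT))
              / (4 * C^2))))
          ≤ ∑ t : Fin T, g t * (alg t g - u t) := by
  intro P hP hL1 hL2
  have hT0 : 0 < T := hT
  have hi0 : Nonempty (Fin T) := ⟨⟨0, hT0⟩⟩
  have hC0 : (0:ℝ) < C := lt_of_lt_of_le one_pos hC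
  have h4C : (0:ℝ) < 4 * C^2 := by positivity
  -- basic matrix facts
  have hApd : A.PosDef := by rw [hA]; exact hM.inv
  have hBsymm : B.IsSymm := by
    have hAsymm : A.IsSymm := by
      have h := hApd.isHermitian
      rwa [Matrix.IsHermitian, Matrix.conjTranspose_eq_transpose_of_trivial] at h
    rw [hB, Matrix.IsSymm, Matrix.transpose_sub, hAsymm, Matrix.diagonal_transpose]
  have hBdiag : ∀ i, B i i = 0 := by
    intro i; simp [hB, Matrix.sub_apply, Matrix.diagonal_apply]
  have hdiagpos : ∀ i, 0 < A i i := by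
    intro i
    have hv : (Pi.single i 1 : Fin T → ℝ) ≠ 0 := by
      intro h
      have := congrFun h i
      simp at this
    have h := hApd.dotProduct_mulVec_pos hv
    rw [star_trivial, Matrix.mulVec_single_one, single_dotProduct, one_mul] at h
    exact h
  have htr : 0 < A.trace := by
    rw [Matrix.trace]
    exact Finset.sum_pos (fun i _ => hdiagpos i) Finset.univ_nonempty
  have hfBnn : 0 ≤ frobNorm B := Real.sqrt_nonneg _
  -- positivity of the sup and frobenius norm
  have hrow_nonneg : ∀ i : Fin T, 0 ≤ ∑ j, (B i j)^2 :=
    fun i => Finset.sum_nonneg fun j _ => sq_nonneg _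
  obtain ⟨i0, j0, hij0⟩ : ∃ i j, B i j ≠ 0 := by
    by_contra h
    push_neg at h
    exact hBne (by ext i j; simpa using h i j)
  have hrow0 : 0 < ∑ j, (B i0 j)^2 := by
    have : 0 < (B i0 j0)^2 := lt_of_le_of_ne (sq_nonneg _) (Ne.symm (pow_ne_zero 2 hij0))
    exact lt_of_lt_of_le this (Finset.single_le_sum (f := fun j => (B i0 j)^2) (fun j _ => sq_nonneg _) (Finset.mem_univ j0))
  have hbdd : BddAbove (Set.range fun i : Fin T => ∑ j, (B i j)^2) :=
    Set.Finite.bddAbove (Set.finite_range _)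
  have hrowle : ∀ i : Fin T, ∑ j, (B i j)^2 ≤ ⨆ i : Fin T, ∑ j, (B i j)^2 :=
    fun i => le_ciSup hbdd i
  have hSup_pos : 0 < ⨆ i : Fin T, ∑ j : Fin T, (B i j)^2 :=
    lt_of_lt_of_le hrow0 (hrowle i0)
  have hfrobSq : (frobNorm B)^2 = ∑ i : Fin T, ∑ j : Fin T, (B i j)^2 :=
    Real.sq_sqrt (Finset.sum_nonneg fun i _ => hrow_nonneg i)
  have hfB_pos : 0 < frobNorm B := by
    apply Real.sqrt_pos.mpr
    exact lt_of_lt_of_le hrow0 (Finset.single_le_sum (f := fun i => ∑ j, (B i j)^2) (fun i _ => hrow_nonneg i) (Finset.mem_univ i0))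
  -- abbreviations
  set x := Real.sqrt (P * (A.trace + frobNorm B)) with hxdef
  have hx : 0 < x := Real.sqrt_pos.mpr (by positivity)
  set L := Real.logb 2 (x / (2 * εT)) with hLdef
  have h2L : (2:ℝ) ^ L = x / (2 * εT) := Real.rpow_logb two_pos (by norm_num) (by positivity)
  have hL0 : 0 < L := lt_of_lt_of_le h4C hL1
  set q := Real.sqrt (L / (4 * C^2)) with hqdef
  have hq2 : q^2 = L / (4 * C^2) := Real.sq_sqrt (by positivity)
  have hq1 : 1 ≤ q := by
    rw [show (1:ℝ) = Real.sqrt 1 by simp]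
    exact Real.sqrt_le_sqrt ((one_le_div h4C).mpr hL1)
  have hq0 : 0 < q := lt_of_lt_of_le one_pos hq1
  have hqL : 4 * C^2 * q^2 = L := by rw [hq2]; field_simp
  -- the anticoncentration bound applies
  have hqu : q ≤ frobNorm B /
      (C * Real.sqrt (2 * ⨆ i : Fin T, ∑ j : Fin T, (B i j)^2)) := by
    set Sup := ⨆ i : Fin T, ∑ j : Fin T, (B i j)^2 with hSupdef
    have hC2 : (0:ℝ) < C^2 := by positivity
    have hden : C * Real.sqrt (2 * Sup) = Real.sqrt (C^2 * (2 * Sup)) := by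
      rw [Real.sqrt_mul (sq_nonneg C), Real.sqrt_sq hC0.le]
    have hfr : frobNorm B = Real.sqrt (∑ i : Fin T, ∑ j : Fin T, (B i j)^2) := rfl
    rw [hqdef, hfr, hden, ← Real.sqrt_div (Finset.sum_nonneg fun i _ => hrow_nonneg i)]
    apply Real.sqrt_le_sqrt
    rw [div_le_div_iff₀ h4C (by positivity)]
    nlinarith [mul_le_mul_of_nonneg_right hL2 (by positivity : (0:ℝ) ≤ 2 * C^2 * Sup),
      mul_le_mul_of_nonneg_left hBF (by positivity : (0:ℝ) ≤ 4 * C^2), hSup_pos, hC2]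
  have hprob := hanti B hBne hBsymm hBdiag q hq1 hqu
  rw [hqL] at hprob
  set E := Finset.univ.filter (fun ε : Fin T → Bool =>
      q * frobNorm B ≤
        ∑ i : Fin T, ∑ j : Fin T, signVec ε i * signVec ε j * B i j) with hEdef
  have h2T : (0:ℝ) < 2^T := by positivity
  have h2Lpos : (0:ℝ) < (2:ℝ)^(-L) := Real.rpow_pos_of_pos two_pos _
  have hEcard : (2:ℝ)^(-L) * 2^T ≤ (E.card : ℝ) := (le_div_iff₀ h2T).mp hprob
  have hEpos : 0 < (E.card : ℝ) := lt_of_lt_of_le (by positivity) hEcard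
  have hEne : E.Nonempty := Finset.card_pos.mp (by exact_mod_cast hEpos)
  -- the random-sign sums
  set S : (Fin T → Bool) → ℝ := fun ε =>
    ∑ t : Fin T, (G * signVec ε t) * alg t (fun s => G * signVec ε s) with hSdef
  have hSmean : ∑ ε : Fin T → Bool, S ε = 0 := sum_S_zero G alg hcausal
  have hSle : ∀ ε, S ε ≤ G * εT := by
    intro ε
    refine hregret _ fun t => ?_
    have : |signVec ε t| = 1 := by
      simp only [signVec]; cases h : ε t <;> simp [h]
    rw [abs_mul, this, mul_one, abs_of_pos hG]
  -- lower bound on the sum over E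
  have hcardfun : (Fintype.card (Fin T → Bool) : ℝ) = 2^T := by
    simp [Fintype.card_fun]
  have hEcard_le : E.card ≤ Fintype.card (Fin T → Bool) := by
    simpa using Finset.card_le_card (Finset.subset_univ E)
  have hEsum : (E.card : ℝ) * (G * εT) - 2^T * (G * εT) ≤ ∑ ε ∈ E, S ε := by
    have hsplit : ∑ ε ∈ Finset.univ \ E, S ε + ∑ ε ∈ E, S ε = ∑ ε : Fin T → Bool, S ε :=
      Finset.sum_sdiff (Finset.subset_univ E)
    have hcompl : ∑ ε ∈ Finset.univ \ E, S ε ≤ ((Finset.univ \ E).card : ℝ) * (G * εT) := by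
      have := Finset.sum_le_card_nsmul (Finset.univ \ E) S (G * εT) (fun ε _ => hSle ε)
      simpa [nsmul_eq_mul] using this
    have hcard_sdiff : ((Finset.univ \ E).card : ℝ) = 2^T - E.card := by
      rw [Finset.card_sdiff_of_subset (Finset.subset_univ E), Finset.card_univ]
      rw [Nat.cast_sub hEcard_le, hcardfun]
    rw [hSmean] at hsplit
    rw [hcard_sdiff] at hcompl
    have hGε : 0 < G * εT := by positivity
    nlinarith [hcompl, hsplit]
  -- extract a good sign pattern
  have h2Lneg : (2:ℝ)^(-L) = 2 * εT / x := by
    rw [Real.rpow_neg (by norm_num : (0:ℝ) ≤ 2), h2L, inv_div]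
  obtain ⟨ε, hεE, hεS⟩ : ∃ ε ∈ E, G * εT - (G/2) * x ≤ S ε := by
    refine Finset.exists_le_of_sum_le hEne ?_
    rw [Finset.sum_const, nsmul_eq_mul]
    have hkey : 2^T * (G * εT) ≤ (E.card : ℝ) * ((G/2) * x) := by
      have h1 : ((2:ℝ)^(-L) * 2^T) * ((G/2) * x) ≤ (E.card : ℝ) * ((G/2) * x) :=
        mul_le_mul_of_nonneg_right hEcard (by positivity)
      have h2 : ((2:ℝ)^(-L) * 2^T) * ((G/2) * x) = 2^T * (G * εT) := by
        rw [h2Lneg]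
        field_simp
      linarith
    nlinarith [hEsum, hkey]
  have hεQ : q * frobNorm B ≤
      ∑ i : Fin T, ∑ j : Fin T, signVec ε i * signVec ε j * B i j :=
    (Finset.mem_filter.mp hεE).2
  -- the comparator
  set σ : Fin T → ℝ := signVec ε with hσdef
  have hσne : σ ≠ 0 := by
    intro h
    have := congrFun h ⟨0, hT0⟩
    simp only [hσdef, signVec, Pi.zero_apply] at this
    cases hb : ε ⟨0, hT0⟩ <;> rw [hb] at this <;> norm_num at this
  set R := σ ⬝ᵥ (A *ᵥ σ) with hRdef
  have hRpos : 0 < R := by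
    have := hApd.dotProduct_mulVec_pos hσne
    simpa using this
  have hRdecomp : R = A.trace +
      ∑ i : Fin T, ∑ j : Fin T, σ i * σ j * B i j := by
    have hAij : ∀ i j, A i j = B i j + (if i = j then A i i else 0) := by
      intro i j
      rw [hB]
      simp only [Matrix.sub_apply, Matrix.diagonal_apply]
      split <;> ring
    have hσsq : ∀ i, σ i * σ i = 1 := fun i => signVec_sq ε i
    have hinner : ∀ i : Fin T, σ i * (∑ j, A i j * σ j)
        = (∑ j, σ i * σ j * B i j) + A i i := by
      intro i
      rw [Finset.mul_sum]
      have hterm : ∀ j, σ i * (A i j * σ j)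
          = σ i * σ j * B i j + (if i = j then A i i else 0) := by
        intro j
        rw [hAij i j]
        split_ifs with h
        · subst h
          rw [hBdiag i]
          linear_combination A i i * hσsq i
        · ring
      rw [Finset.sum_congr rfl (fun j _ => hterm j), Finset.sum_add_distrib,
        Finset.sum_ite_eq]
      simp
    rw [hRdef]
    simp only [dotProduct, Matrix.mulVec]
    rw [Finset.sum_congr rfl (fun i _ => hinner i), Finset.sum_add_distrib]
    rw [Matrix.trace]
    simp only [Matrix.diag]
    ring
  set c : ℝ := Real.sqrt P / Real.sqrt R with hcdef
  have hc0 : 0 < c := by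
    apply div_pos (Real.sqrt_pos.mpr hP) (Real.sqrt_pos.mpr hRpos)
  refine ⟨fun t => G * σ t, fun t => -c * (A *ᵥ σ) t, ?_, ?_, ?_⟩
  · intro t
    have : |σ t| = 1 := by
      simp only [hσdef, signVec]; cases h : ε t <;> simp [h]
    rw [abs_mul, this, mul_one, abs_of_pos hG]
  · -- norm of the comparator
    have hu : (fun t => -c * (A *ᵥ σ) t) = (-c) • (A *ᵥ σ) := by
      funext t; simp [smul_eq_mul]
    have hMA : M * A = 1 := by
      rw [hA]
      exact Matrix.mul_nonsing_inv M (isUnit_iff_ne_zero.mpr (ne_of_gt hM.det_pos))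
    have hMu : M *ᵥ ((-c) • (A *ᵥ σ)) = (-c) • σ := by
      rw [Matrix.mulVec_smul, Matrix.mulVec_mulVec, hMA, Matrix.one_mulVec]
    have hdot : ((-c) • (A *ᵥ σ)) ⬝ᵥ ((-c) • σ) = c^2 * R := by
      rw [smul_dotProduct, dotProduct_smul, smul_eq_mul, smul_eq_mul,
        dotProduct_comm, ← hRdef]
      ring
    have hc2 : c^2 * R = P := by
      rw [hcdef, div_pow, Real.sq_sqrt hP.le, Real.sq_sqrt hRpos.le]
      field_simp
    rw [hu, hMu, hdot, hc2]
  · -- the regret bound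
    have hsum : ∑ t : Fin T, (G * σ t) * (alg t (fun s => G * σ s) - (-c * (A *ᵥ σ) t))
        = S ε + G * c * R := by
      have hterm : ∀ t : Fin T, (G * σ t) * (alg t (fun s => G * σ s) - (-c * (A *ᵥ σ) t))
          = (G * σ t) * alg t (fun s => G * σ s) + G * c * (σ t * (A *ᵥ σ) t) := by
        intro t; ring
      rw [Finset.sum_congr rfl (fun t _ => hterm t), Finset.sum_add_distrib,
        ← Finset.mul_sum]
      congr 1
    have hGcR : G * c * R = G * (Real.sqrt P * Real.sqrt R) := by
      have hsRne : Real.sqrt R ≠ 0 := ne_of_gt (Real.sqrt_pos.mpr hRpos)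
      rw [hcdef]
      field_simp
      linear_combination (-1) * (Real.sq_sqrt hRpos.le)
    have hDR : A.trace + frobNorm B * q ≤ R := by
      rw [hRdecomp, mul_comm (frobNorm B) q]
      linarith [hεQ]
    have h1 : x ≤ Real.sqrt (P * (A.trace + frobNorm B * q)) := by
      rw [hxdef]
      apply Real.sqrt_le_sqrt
      have h' : frobNorm B ≤ frobNorm B * q := le_mul_of_one_le_right hfBnn hq1
      exact mul_le_mul_of_nonneg_left (by linarith) hP.le
    have h2 : Real.sqrt (P * (A.trace + frobNorm B * q)) ≤ Real.sqrt P * Real.sqrt R := by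
      rw [← Real.sqrt_mul hP.le]
      apply Real.sqrt_le_sqrt
      exact mul_le_mul_of_nonneg_left hDR hP.le
    calc G * εT + (G / 2) * Real.sqrt (P * (A.trace + frobNorm B * q))
        ≤ (G * εT - (G/2) * x) + G * (Real.sqrt P * Real.sqrt R) := by
          linarith [mul_le_mul_of_nonneg_left h1 (by linarith : (0:ℝ) ≤ G/2),
            mul_le_mul_of_nonneg_left h2 hG.le]
      _ ≤ S ε + G * c * R := by rw [hGcR]; linarith [hεS]
      _ = ∑ t : Fin T, (G * σ t) * (alg t (fun s => G * σ s) - (-c * (A *ᵥ σ) t)) := hsum.symm
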